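/- Let N ≥ 2, u ∈ (0,1), Γ ∈ (0,1), P_f, P_m ∈ [0,1] with P_f + P_m ≠ 1, and define the quadratic form Ṽ(w̃) = ((u·P_m(1−P_m) + (1−u)·P_f(1−P_f))/(1−P_f−P_m)²)·∑_{i=1}^{N} w̃_i² + u(1−u)·(∑_{i=1}^{N} w̃_i² + 2·∑_{j=1}^{N−1} Γ^{j}·∑_{i=1}^{N−j} w̃_i w̃_{i+j}) on weights summing to 1. Then at the weights w̃* given by w̃*_1 = w̃*_N = 1/(N(1−Γ)+2Γ) and w̃*_i = (1−Γ)/(N(1−Γ)+2Γ) for 1 < i < N, the value is Ṽ(w̃*) = u(1−u)(1+Γ)/(N(1−Γ)+2Γ) + ((u·P_m(1−P_m) + (1−u)·P_f(1−P_f))/(1−P_f−P_m)²)·(2 + (N−2)(1−Γ)²)/((N(1−Γ)+2Γ)²). -/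

import Mathlib

open Finset


lemma sum_ite_ends (N : ℕ) (hN : 2 ≤ N) (A B : ℝ) :
    ∑ i ∈ range N, (if i = 0 ∨ i = N - 1 then A else B) = 2 * A + ((N : ℝ) - 2) * B := by
  rw [Finset.sum_ite]
  have hf : (range N).filter (fun i => i = 0 ∨ i = N - 1) = {0, N - 1} := by
    ext i
    simp only [mem_filter, mem_range, mem_insert, mem_singleton]
    omega
  have hcard : ((range N).filter (fun i => i = 0 ∨ i = N - 1)).card = 2 := by
    rw [hf, card_insert_of_notMem (by simp; omega), card_singleton]
  have htot := Finset.card_filter_add_card_filter_not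
    (s := range N) (p := fun i => i = 0 ∨ i = N - 1)
  rw [card_range] at htot
  have hcard2 : ((range N).filter (fun i => ¬(i = 0 ∨ i = N - 1))).card = N - 2 := by omega
  rw [sum_const, sum_const, hcard, hcard2]
  have : ((N - 2 : ℕ) : ℝ) = (N : ℝ) - 2 := by
    push_cast [Nat.cast_sub hN]; ring
  simp [nsmul_eq_mul, this]

lemma geom_aux (Γ : ℝ) (m : ℕ) :
    (1 - Γ) * ∑ j ∈ Icc 1 m, Γ ^ j = Γ - Γ ^ (m + 1) := by
  induction m with
  | zero => simp
  | succ m ih =>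
    rw [Finset.sum_Icc_succ_top (by omega : 1 ≤ m + 1)]
    ring_nf
    ring_nf at ih
    linear_combination ih

lemma key (Γ : ℝ) (m : ℕ) :
    Γ ^ (m + 1) + 2 * (1 - Γ) * (∑ j ∈ Icc 1 m, Γ ^ j)
      + (1 - Γ) ^ 2 * (∑ j ∈ Icc 1 m, ((m : ℝ) - j) * Γ ^ j)
    = (m : ℝ) * Γ * (1 - Γ) + Γ := by
  induction m with
  | zero => simp
  | succ m ih =>
    have hg := geom_aux Γ m
    rw [Finset.sum_Icc_succ_top (by omega : 1 ≤ m + 1),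
        Finset.sum_Icc_succ_top (by omega : 1 ≤ m + 1)]
    have h2 : ∑ j ∈ Icc 1 m, ((↑(m + 1) : ℝ) - j) * Γ ^ j
        = (∑ j ∈ Icc 1 m, ((m : ℝ) - j) * Γ ^ j) + ∑ j ∈ Icc 1 m, Γ ^ j := by
      rw [← Finset.sum_add_distrib]
      apply Finset.sum_congr rfl
      intro j hj
      push_cast
      ring
    rw [h2]
    push_cast
    ring_nf
    ring_nf at ih hg
    linear_combination ih + (1 - Γ) * hg

/-- Mean squared error of the bias-corrected weighted averaging duty-cycle
estimator under sensing errors, as a quadratic form in the weights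
`w 0, …, w (N-1)` (0-based; the paper's `w̃_i` is `w (i-1)`). -/
noncomputable def Vtilde (u Γ Pf Pm : ℝ) (N : ℕ) (w : ℕ → ℝ) : ℝ :=
  (u * Pm * (1 - Pm) + (1 - u) * Pf * (1 - Pf)) / (1 - Pf - Pm) ^ 2 *
      ∑ i ∈ Finset.range N, w i ^ 2
    + u * (1 - u) *
        (∑ i ∈ Finset.range N, w i ^ 2
          + 2 * ∑ j ∈ Finset.Icc 1 (N - 1), Γ ^ j *
              ∑ i ∈ Finset.range (N - j), w i * w (i + j))

/-- The optimal weighting sequence: the first and last weights are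
`1/(N(1-Γ)+2Γ)`, the others `(1-Γ)/(N(1-Γ)+2Γ)`. -/
noncomputable def wstar (Γ : ℝ) (N : ℕ) (i : ℕ) : ℝ :=
  if i = 0 ∨ i = N - 1 then 1 / ((N : ℝ) * (1 - Γ) + 2 * Γ)
  else (1 - Γ) / ((N : ℝ) * (1 - Γ) + 2 * Γ)

/-- the value of the quadratic form `Ṽ` at the optimal weights. -/
theorem optimal_weights_value_sensing_errors (N : ℕ) (hN : 2 ≤ N) (u Γ Pf Pm : ℝ)
    (hu : 0 < u) (hu1 : u < 1) (hΓ : Γ ∈ Set.Ioo (0 : ℝ) 1)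
    (hPf : Pf ∈ Set.Icc (0 : ℝ) 1) (hPm : Pm ∈ Set.Icc (0 : ℝ) 1) (hPfm : Pf + Pm ≠ 1) :
    Vtilde u Γ Pf Pm N (wstar Γ N)
      = u * (1 - u) * (1 + Γ) / ((N : ℝ) * (1 - Γ) + 2 * Γ)
        + (u * Pm * (1 - Pm) + (1 - u) * Pf * (1 - Pf)) / (1 - Pf - Pm) ^ 2 *
            ((2 + ((N : ℝ) - 2) * (1 - Γ) ^ 2) / ((N : ℝ) * (1 - Γ) + 2 * Γ) ^ 2) := by
  obtain ⟨hΓ0, hΓ1⟩ := hΓ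
  obtain ⟨m, rfl⟩ : ∃ m, N = m + 2 := ⟨N - 2, by omega⟩
  set D : ℝ := ((m + 2 : ℕ) : ℝ) * (1 - Γ) + 2 * Γ with hD
  have hDpos : 0 < D := by
    rw [hD]; push_cast; nlinarith
  set a : ℝ := 1 / D with ha
  set b : ℝ := (1 - Γ) / D with hb
  set G1 : ℝ := ∑ j ∈ Icc 1 m, Γ ^ j with hG1
  set G2 : ℝ := ∑ j ∈ Icc 1 m, ((m : ℝ) - j) * Γ ^ j with hG2
  -- sum of squares
  have hS : ∑ i ∈ range (m + 2), (wstar Γ (m + 2) i) ^ 2 = 2 * a ^ 2 + (m : ℝ) * b ^ 2 := by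
    have h1 : ∀ i ∈ range (m + 2), (wstar Γ (m + 2) i) ^ 2
        = if i = 0 ∨ i = (m + 2) - 1 then a ^ 2 else b ^ 2 := by
      intro i hi
      unfold wstar
      split_ifs <;> simp only [ha, hb, hD] <;> ring
    rw [Finset.sum_congr rfl h1, sum_ite_ends (m + 2) (by omega)]
    push_cast
    ring
  -- inner cross sums for 1 ≤ j ≤ m
  have hinner : ∀ j ∈ Icc 1 m,
      ∑ i ∈ range ((m + 2) - j), wstar Γ (m + 2) i * wstar Γ (m + 2) (i + j)
        = 2 * (a * b) + ((m : ℝ) - j) * b ^ 2 := by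
    intro j hj
    rw [Finset.mem_Icc] at hj
    obtain ⟨hj1, hj2⟩ := hj
    have h1 : ∀ i ∈ range ((m + 2) - j), wstar Γ (m + 2) i * wstar Γ (m + 2) (i + j)
        = if i = 0 ∨ i = ((m + 2) - j) - 1 then a * b else b ^ 2 := by
      intro i hi
      rw [Finset.mem_range] at hi
      unfold wstar
      have e1 : ¬ (i = (m + 2) - 1) := by omega
      have e2 : ¬ (i + j = 0) := by omega
      split_ifs <;>
        first
          | (exfalso; omega)
          | (simp only [ha, hb, hD]; try ring)
    rw [Finset.sum_congr rfl h1, sum_ite_ends ((m + 2) - j) (by omega)]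
    have : (((m + 2) - j : ℕ) : ℝ) = (m : ℝ) + 2 - j := by
      push_cast [Nat.cast_sub (by omega : j ≤ m + 2)]
      ring
    rw [this]
    ring
  -- the full correlation sum
  have hT : ∑ j ∈ Icc 1 ((m + 2) - 1), Γ ^ j *
        ∑ i ∈ range ((m + 2) - j), wstar Γ (m + 2) i * wstar Γ (m + 2) (i + j)
      = Γ ^ (m + 1) * a ^ 2 + 2 * (a * b) * G1 + b ^ 2 * G2 := by
    have hm1 : (m + 2) - 1 = m + 1 := by omega
    rw [hm1, Finset.sum_Icc_succ_top (by omega : 1 ≤ m + 1)]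
    have htop : ∑ i ∈ range ((m + 2) - (m + 1)), wstar Γ (m + 2) i * wstar Γ (m + 2) (i + (m + 1))
        = a ^ 2 := by
      have : (m + 2) - (m + 1) = 1 := by omega
      rw [this, Finset.sum_range_one]
      unfold wstar
      rw [if_pos (Or.inl rfl), if_pos (Or.inr (by omega))]
      simp only [ha, hD]; ring
    rw [htop]
    have hmain : ∑ j ∈ Icc 1 m, Γ ^ j *
          ∑ i ∈ range ((m + 2) - j), wstar Γ (m + 2) i * wstar Γ (m + 2) (i + j)
        = 2 * (a * b) * G1 + b ^ 2 * G2 := by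
      rw [hG1, hG2, Finset.mul_sum, Finset.mul_sum, ← Finset.sum_add_distrib]
      apply Finset.sum_congr rfl
      intro j hj
      rw [hinner j hj]
      ring
    rw [hmain]
    ring
  have hC := key Γ m
  -- value of S
  rw [← hG1, ← hG2] at hC
  have hDne : D ≠ 0 := ne_of_gt hDpos
  have hSval : 2 * a ^ 2 + (m : ℝ) * b ^ 2 = (2 + (m : ℝ) * (1 - Γ) ^ 2) / D ^ 2 := by
    rw [ha, hb]
    field_simp
  -- value of S + 2T
  have hST : (2 * a ^ 2 + (m : ℝ) * b ^ 2)
        + 2 * (Γ ^ (m + 1) * a ^ 2 + 2 * (a * b) * G1 + b ^ 2 * G2)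
      = (1 + Γ) / D := by
    have step1 : (2 * a ^ 2 + (m : ℝ) * b ^ 2)
          + 2 * (Γ ^ (m + 1) * a ^ 2 + 2 * (a * b) * G1 + b ^ 2 * G2)
        = (2 + (m : ℝ) * (1 - Γ) ^ 2
            + 2 * (Γ ^ (m + 1) + 2 * (1 - Γ) * G1 + (1 - Γ) ^ 2 * G2)) / D ^ 2 := by
      rw [ha, hb]
      field_simp
    rw [step1, hC]
    rw [div_eq_div_iff (pow_ne_zero 2 hDne) hDne]
    have hD2 : D = (m : ℝ) * (1 - Γ) + 2 := by rw [hD]; push_cast; ring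
    rw [hD2]
    ring
  unfold Vtilde
  rw [hS, hT, hST, hSval]
  have hcast : ((m + 2 : ℕ) : ℝ) - 2 = (m : ℝ) := by push_cast; ring
  rw [hcast]
  ring
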